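/- Let p be an odd prime and μ ≥ 1. Every m×m matrix over Z/p^μ can be written as a sum of two invertible m×m matrices over Z/p^μ. -/

import Mathlib

lemma zmod_key {p μ : ℕ} (hp : p.Prime) (hp2 : p ≠ 2) (hμ : 1 ≤ μ)
    (a : ZMod (p ^ μ)) : ∃ b : ZMod (p ^ μ), IsUnit b ∧ IsUnit (a - b) := by
  haveI : Fact p.Prime := ⟨hp⟩
  have hμ0 : μ ≠ 0 := by omega
  have hdvd : p ∣ p ^ μ := dvd_pow_self p hμ0
  haveI : NeZero (p ^ μ) := ⟨pow_ne_zero μ hp.ne_zero⟩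
  set f : ZMod (p ^ μ) →+* ZMod p := ZMod.castHom hdvd (ZMod p) with hf
  have hu : ∀ x : ZMod (p ^ μ), f x ≠ 0 → IsUnit x := by
    intro x hx
    have hx' : ¬ p ∣ x.val := by
      intro hdv
      apply hx
      have h0 : ((x.val : ℕ) : ZMod p) = 0 := (ZMod.natCast_eq_zero_iff _ _).mpr hdv
      have hxv : ((x.val : ℕ) : ZMod (p ^ μ)) = x := ZMod.natCast_zmod_val x
      rw [← hxv]
      simpa [hf] using h0
    have hcop : Nat.Coprime x.val p := (Nat.Prime.coprime_iff_not_dvd hp).mpr hx' |>.symm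
    have : IsUnit ((x.val : ℕ) : ZMod (p ^ μ)) :=
      (ZMod.isUnit_iff_coprime _ _).mpr (Nat.Coprime.pow_right μ hcop)
    rwa [ZMod.natCast_zmod_val] at this
  have h1 : (1 : ZMod p) ≠ 0 := one_ne_zero
  have h2 : (2 : ZMod p) ≠ 0 := by
    intro h
    have hd : p ∣ 2 := (ZMod.natCast_eq_zero_iff 2 p).mp (by exact_mod_cast h)
    exact hp2 ((Nat.prime_dvd_prime_iff_eq hp Nat.prime_two).mp hd)
  by_cases h : f (a - 1) = 0
  · have hf2 : f (2 : ZMod (p ^ μ)) = 2 := by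
      rw [show (2 : ZMod (p ^ μ)) = 1 + 1 by norm_num, map_add, map_one]; norm_num
    refine ⟨2, hu 2 (by rw [hf2]; exact h2), hu _ ?_⟩
    intro habs
    apply h1
    have h0 : f ((a - 1) - (a - 2)) = 0 := by rw [map_sub, h, habs, sub_zero]
    have he : (a - 1) - (a - 2) = 1 := by ring
    rw [he, map_one] at h0
    exact h0
  · exact ⟨1, isUnit_one, hu _ h⟩

theorem stmt6 {p : ℕ} (hp : p.Prime) (hp2 : p ≠ 2) {μ : ℕ} (hμ : 1 ≤ μ) {m : ℕ}
    (A : Matrix (Fin m) (Fin m) (ZMod (p ^ μ))) :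
    ∃ B C : Matrix (Fin m) (Fin m) (ZMod (p ^ μ)),
      IsUnit B ∧ IsUnit C ∧ A = B + C := by
  choose b hb1 hb2 using fun i : Fin m => zmod_key hp hp2 hμ (A i i)
  set B : Matrix (Fin m) (Fin m) (ZMod (p ^ μ)) :=
    Matrix.of fun i j => if i = j then b i else if j < i then A i j else 0 with hB
  refine ⟨B, A - B, ?_, ?_, by abel⟩
  · rw [Matrix.isUnit_iff_isUnit_det]
    have htr : B.BlockTriangular OrderDual.toDual := by
      intro i j hij
      have hij' : (i : Fin m) < j := hij
      simp only [hB, Matrix.of_apply]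
      rw [if_neg (ne_of_lt hij'), if_neg (not_lt.mpr hij'.le)]
    rw [Matrix.det_of_lowerTriangular B htr]
    exact Finset.prod_induction _ IsUnit (fun a c ha hc => ha.mul hc) isUnit_one
      (fun i _ => by simpa [hB] using hb1 i)
  · rw [Matrix.isUnit_iff_isUnit_det]
    have htr : (A - B).BlockTriangular id := by
      intro i j hij
      have hij' : (j : Fin m) < i := hij
      simp only [hB, Matrix.sub_apply, Matrix.of_apply]
      rw [if_neg (ne_of_gt hij'), if_pos hij', sub_self]
    rw [Matrix.det_of_upperTriangular htr]
    exact Finset.prod_induction _ IsUnit (fun a c ha hc => ha.mul hc) isUnit_one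
      (fun i _ => by simpa [hB] using hb2 i)
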